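/- Let $N_p \subseteq \mathbb{C}^{d_p}$ and $N_q \subseteq \mathbb{C}^{d_q}$ be subspaces of dimensions $e_p$ and $e_q$ with Plücker coordinates $(\Delta_{I'})$, $(\Delta_{J'})$, and let $A$ be a $d_q \times d_p$ matrix with entries $m_{j,i}$. Then $A(N_p) \subseteq N_q$ if and only if all quiver Plücker relations $\sum_{i \notin I, j \in J} (-1)^{\epsilon(i,I)+\epsilon(j,J)} m_{j,i} \Delta_{I\cup\{i\}} \Delta_{J\setminus\{j\}} = 0$ hold, for all $(e_p-1)$-subsets $I \subseteq \{1,\dots,d_p\}$ and $(e_q+1)$-subsets $J \subseteq \{1,\dots,d_q\}$. -/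

import Mathlib

open Matrix Finset

def eps {d : ℕ} (i : Fin d) (I : Finset (Fin d)) : ℕ := (I.filter fun i' => i' ≤ i).card

noncomputable def plucker {d e : ℕ} (B : Matrix (Fin d) (Fin e) ℂ) (I : Finset (Fin d)) : ℂ :=
  if h : I.card = e then (B.submatrix (fun k => (I.orderIsoOfFin h k : Fin d)) id).det else 0

/-- The columns of `B` form a basis of the subspace `N` of `ℂ^d`. -/
def IsColBasis {d e : ℕ} (B : Matrix (Fin d) (Fin e) ℂ) (N : Submodule ℂ (Fin d → ℂ)) : Prop :=
  LinearIndependent ℂ (fun l => fun i => B i l) ∧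
    Submodule.span ℂ (Set.range fun l => fun i => B i l) = N

noncomputable def qpr {dp dq ep eq : ℕ} (A : Matrix (Fin dq) (Fin dp) ℂ)
    (Bp : Matrix (Fin dp) (Fin ep) ℂ) (Bq : Matrix (Fin dq) (Fin eq) ℂ)
    (I : Finset (Fin dp)) (J : Finset (Fin dq)) : ℂ :=
  ∑ i ∈ Iᶜ, ∑ j ∈ J,
    (-1 : ℂ) ^ (eps i I + eps j J) * A j i * plucker Bp (insert i I) * plucker Bq (J.erase j)

namespace QPRaux

lemma plucker_eq {d e : ℕ} (B : Matrix (Fin d) (Fin e) ℂ) {I : Finset (Fin d)}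
    (h : I.card = e) : plucker B I = (B.submatrix (fun k => I.orderEmbOfFin h k) id).det := by
  rw [plucker, dif_pos h]
  simp [Finset.coe_orderIsoOfFin_apply]

lemma plucker_card_ne {d e : ℕ} (B : Matrix (Fin d) (Fin e) ℂ) {I : Finset (Fin d)}
    (h : I.card ≠ e) : plucker B I = 0 := dif_neg h

lemma card_filter_lt_enum {d n : ℕ} (s : Finset (Fin d)) (h : s.card = n) (k : Fin n) :
    (s.filter (fun x => x < s.orderEmbOfFin h k)).card = k := by
  have himg : s.filter (fun x => x < s.orderEmbOfFin h k)
      = (Finset.Iio k).image (s.orderEmbOfFin h) := by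
    ext x
    simp only [mem_filter, mem_image, Finset.mem_Iio]
    constructor
    · rintro ⟨hxs, hlt⟩
      obtain ⟨m, hm⟩ : ∃ m, s.orderEmbOfFin h m = x := by
        have := Finset.range_orderEmbOfFin s h
        rw [Set.ext_iff] at this
        exact (this x).mpr hxs
      refine ⟨m, ?_, hm⟩
      rw [← hm] at hlt
      exact (OrderEmbedding.lt_iff_lt _).mp hlt
    · rintro ⟨m, hmk, rfl⟩
      exact ⟨Finset.orderEmbOfFin_mem s h m, (OrderEmbedding.lt_iff_lt _).mpr hmk⟩
  rw [himg, Finset.card_image_of_injective _ (s.orderEmbOfFin h).injective, Fin.card_Iio]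

lemma exists_enum_eq {d n : ℕ} (s : Finset (Fin d)) (h : s.card = n) {j : Fin d} (hj : j ∈ s) :
    ∃ k : Fin n, s.orderEmbOfFin h k = j := by
  have := Finset.range_orderEmbOfFin s h
  rw [Set.ext_iff] at this
  exact (this j).mpr hj

lemma eps_not_mem {d : ℕ} {i : Fin d} {I : Finset (Fin d)} (h : i ∉ I) :
    eps i I = (I.filter (fun x => x < i)).card := by
  unfold eps
  congr 1
  apply Finset.filter_congr
  intro x hx
  exact ⟨fun hle => lt_of_le_of_ne hle (by rintro rfl; exact h hx), le_of_lt⟩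

lemma eps_mem {d : ℕ} {j : Fin d} {J : Finset (Fin d)} (h : j ∈ J) :
    eps j J = (J.filter (fun x => x < j)).card + 1 := by
  unfold eps
  have hins : J.filter (fun x => x ≤ j) = insert j (J.filter (fun x => x < j)) := by
    ext x
    simp only [mem_filter, mem_insert]
    constructor
    · rintro ⟨hx, hle⟩
      rcases eq_or_lt_of_le hle with rfl | hlt
      · exact Or.inl rfl
      · exact Or.inr ⟨hx, hlt⟩
    · rintro (rfl | ⟨hx, hlt⟩)
      · exact ⟨h, le_rfl⟩
      · exact ⟨hx, le_of_lt hlt⟩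
  rw [hins, Finset.card_insert_of_notMem (by simp)]

lemma eps_enum {d n : ℕ} (s : Finset (Fin d)) (h : s.card = n) (k : Fin n) :
    eps (s.orderEmbOfFin h k) s = k + 1 := by
  rw [eps_mem (Finset.orderEmbOfFin_mem s h k), card_filter_lt_enum]

lemma erase_enum {d n : ℕ} (s : Finset (Fin d)) (h : s.card = n + 1) (k : Fin (n + 1))
    (h2 : (s.erase (s.orderEmbOfFin h k)).card = n) (m : Fin n) :
    (s.erase (s.orderEmbOfFin h k)).orderEmbOfFin h2 m = s.orderEmbOfFin h (k.succAbove m) := by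
  have := Finset.orderEmbOfFin_unique h2
    (f := fun m => s.orderEmbOfFin h (k.succAbove m)) ?_ ?_
  · exact (congrFun this m).symm
  · intro x
    rw [Finset.mem_erase]
    exact ⟨by simp [Fin.succAbove_ne k x], Finset.orderEmbOfFin_mem s h _⟩
  · exact (s.orderEmbOfFin h).strictMono.comp (Fin.strictMono_succAbove k)



lemma sign_helper (a b c : ℕ) : ((-1 : ℂ)) ^ (a + 2 * b + c) = (-1) ^ (a + c) := by
  rw [show a + 2 * b + c = (a + c) + 2 * b by ring, pow_add, pow_mul, neg_one_sq, one_pow, mul_one]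

/-- The matrix `B` augmented with the extra column `u`. -/
noncomputable def Caug {d e : ℕ} (B : Matrix (Fin d) (Fin e) ℂ) (u : Fin d → ℂ) :
    Matrix (Fin d) (Fin (e + 1)) ℂ := fun i => Fin.snoc (fun l => B i l) (u i)

/-- The linear form on `u` whose vanishing for all `J` characterizes membership in the span. -/
noncomputable def Fq {d e : ℕ} (B : Matrix (Fin d) (Fin e) ℂ) (u : Fin d → ℂ)
    (J : Finset (Fin d)) : ℂ :=
  ∑ j ∈ J, (-1 : ℂ) ^ (eps j J) * u j * plucker B (J.erase j)

lemma plucker_erase_enum {d e : ℕ} (B : Matrix (Fin d) (Fin e) ℂ) {J : Finset (Fin d)}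
    (hJ : J.card = e + 1) (k : Fin (e + 1)) :
    plucker B (J.erase (J.orderEmbOfFin hJ k)) =
      (B.submatrix (fun m => J.orderEmbOfFin hJ (k.succAbove m)) id).det := by
  have hk : J.orderEmbOfFin hJ k ∈ J := Finset.orderEmbOfFin_mem J hJ k
  have h2 : (J.erase (J.orderEmbOfFin hJ k)).card = e := by
    rw [Finset.card_erase_of_mem hk, hJ]
    omega
  rw [plucker_eq _ h2]
  congr 1
  ext m l
  rw [Matrix.submatrix_apply, Matrix.submatrix_apply, erase_enum J hJ k h2 m]

lemma Fq_eq_det {d e : ℕ} (B : Matrix (Fin d) (Fin e) ℂ) (u : Fin d → ℂ)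
    {J : Finset (Fin d)} (hJ : J.card = e + 1) :
    Fq B u J = (-1 : ℂ) ^ (e + 1) * ((Caug B u).submatrix (fun k => J.orderEmbOfFin hJ k) id).det := by
  rw [Matrix.det_succ_column _ (Fin.last e), Finset.mul_sum]
  have hsum : Fq B u J = ∑ k : Fin (e + 1),
      (-1 : ℂ) ^ ((k : ℕ) + 1) * u (J.orderEmbOfFin hJ k) *
        plucker B (J.erase (J.orderEmbOfFin hJ k)) := by
    unfold Fq
    refine (Finset.sum_bij (fun (k : Fin (e + 1)) (_ : k ∈ Finset.univ) =>
        J.orderEmbOfFin hJ k) (fun k _ => Finset.orderEmbOfFin_mem J hJ k)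
      (fun a _ b _ hab => (J.orderEmbOfFin hJ).injective hab)
      (fun j hj => by
        obtain ⟨m, hm⟩ := exists_enum_eq J hJ hj
        exact ⟨m, Finset.mem_univ m, hm⟩)
      (fun k _ => by rw [eps_enum])).symm
  rw [hsum]
  refine Finset.sum_congr rfl fun k _ => ?_
  have h1 : (Caug B u).submatrix (fun k => J.orderEmbOfFin hJ k) id k (Fin.last e)
      = u (J.orderEmbOfFin hJ k) := by
    simp [Caug, Matrix.submatrix_apply, Fin.snoc_last]
  have h2 : (((Caug B u).submatrix (fun k => J.orderEmbOfFin hJ k) id).submatrix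
        k.succAbove (Fin.last e).succAbove).det
      = plucker B (J.erase (J.orderEmbOfFin hJ k)) := by
    rw [plucker_erase_enum B hJ k]
    congr 1
    ext m l
    simp [Caug, Matrix.submatrix_apply, Fin.succAbove_last, Fin.snoc_castSucc]
  rw [h1, h2]
  have hsign : ((-1 : ℂ)) ^ (e + 1) * (-1) ^ ((k : ℕ) + (Fin.last e : ℕ))
      = (-1) ^ ((k : ℕ) + 1) := by
    rw [Fin.val_last, ← pow_add, show e + 1 + ((k : ℕ) + e) = (k : ℕ) + 2 * e + 1 by ring,
      sign_helper]
  rw [← hsign]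
  ring

lemma exists_minor_ne_zero {d e : ℕ} (C : Matrix (Fin d) (Fin e) ℂ)
    (hC : LinearIndependent ℂ (fun l => fun i => C i l)) :
    ∃ (J : Finset (Fin d)) (h : J.card = e),
      (C.submatrix (fun k => J.orderEmbOfFin h k) id).det ≠ 0 := by
  classical
  have hspan : Submodule.span ℂ (Set.range (fun i => C i)) = ⊤ := by
    by_contra hne
    obtain ⟨f, hf0, hfbot⟩ := Submodule.exists_dual_map_eq_bot_of_lt_top
      (lt_top_iff_ne_top.mpr hne) inferInstance
    set y : Fin e → ℂ := fun l => f (fun j => if l = j then 1 else 0) with hy_def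
    have hy : ∀ v, f v = ∑ l, v l * y l := by
      intro v
      rw [LinearMap.pi_apply_eq_sum_univ f v]
      simp [y, smul_eq_mul]
    have hrow : ∀ i, f (C i) = 0 := by
      intro i
      have hmem : f (C i) ∈ Submodule.map f (Submodule.span ℂ (Set.range (fun i => C i))) :=
        ⟨C i, Submodule.subset_span ⟨i, rfl⟩, rfl⟩
      rw [hfbot] at hmem
      simpa using hmem
    have hz := Fintype.linearIndependent_iff.mp hC y ?_
    · exact hf0 (LinearMap.ext fun v => by rw [hy v]; simp [hz])
    · funext i
      have := hrow i
      rw [hy (C i)] at this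
      simpa [Finset.sum_apply, smul_eq_mul, mul_comm] using this
  obtain ⟨b, hbsub, hbspan, hbind⟩ := exists_linearIndependent ℂ (Set.range fun i => C i)
  rw [hspan] at hbspan
  have hbfin : b.Finite := hbind.setFinite
  haveI : Fintype b := hbfin.fintype
  have hcard : Fintype.card b = e := by
    have h1 := finrank_span_set_eq_card hbind
    rw [hbspan, finrank_top] at h1
    rw [← Set.toFinset_card, ← h1, Module.finrank_pi, Fintype.card_fin]
  choose g hg using fun x : b => (hbsub x.2 : ∃ i, C i = (x : Fin e → ℂ))
  have hginj : Function.Injective g := by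
    intro x y hxy
    apply Subtype.ext
    rw [← hg x, ← hg y, hxy]
  set J : Finset (Fin d) := Finset.univ.image g with hJ_def
  have hJcard : J.card = e := by
    rw [hJ_def, Finset.card_image_of_injective _ hginj, Finset.card_univ, hcard]
  refine ⟨J, hJcard, ?_⟩
  set D := C.submatrix (fun k => J.orderEmbOfFin hJcard k) id with hD_def
  have hmemJ : ∀ k : Fin e, J.orderEmbOfFin hJcard k ∈ J := Finset.orderEmbOfFin_mem J hJcard
  have hchoose : ∀ k : Fin e, ∃ x : b, g x = J.orderEmbOfFin hJcard k := by
    intro k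
    obtain ⟨x, -, hx⟩ := Finset.mem_image.mp (hmemJ k)
    exact ⟨x, hx⟩
  choose σ hσ using hchoose
  have hσinj : Function.Injective σ := by
    intro k k' hkk'
    apply (J.orderEmbOfFin hJcard).injective
    rw [← hσ k, ← hσ k', hkk']
  have hDrows : (fun k => D k) = (fun x : b => (x : Fin e → ℂ)) ∘ σ := by
    funext k
    have h1 : D k = C (J.orderEmbOfFin hJcard k) := rfl
    rw [h1, ← hσ k]
    exact hg (σ k)
  have hDind : LinearIndependent ℂ (fun k => D k) := by
    rw [hDrows]
    exact hbind.comp σ hσinj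
  have hunit : IsUnit D := Matrix.linearIndependent_rows_iff_isUnit.mp hDind
  have := (Matrix.isUnit_iff_isUnit_det D).mp hunit
  exact isUnit_iff_ne_zero.mp this



lemma Fq_zero_of_mem {d e : ℕ} {B : Matrix (Fin d) (Fin e) ℂ} {N : Submodule ℂ (Fin d → ℂ)}
    (hB : IsColBasis B N) {u : Fin d → ℂ} (hu : u ∈ N) {J : Finset (Fin d)}
    (hJ : J.card = e + 1) : Fq B u J = 0 := by
  rw [← hB.2] at hu
  induction hu using Submodule.span_induction with
  | mem x hx =>
    obtain ⟨l, rfl⟩ := hx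
    rw [Fq_eq_det B _ hJ]
    have hdet : ((Caug B fun i => B i l).submatrix (fun k => J.orderEmbOfFin hJ k) id).det = 0 := by
      apply Matrix.det_zero_of_column_eq (Fin.castSucc_lt_last l).ne
      intro k
      simp [Caug, Fin.snoc_castSucc, Fin.snoc_last]
    rw [hdet, mul_zero]
  | zero => simp [Fq]
  | add x y _ _ hx hy =>
    have : Fq B (x + y) J = Fq B x J + Fq B y J := by
      unfold Fq
      rw [← Finset.sum_add_distrib]
      exact Finset.sum_congr rfl fun j _ => by simp [Pi.add_apply]; ring
    rw [this, hx, hy, add_zero]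
  | smul a x _ hx =>
    have : Fq B (a • x) J = a * Fq B x J := by
      unfold Fq
      rw [Finset.mul_sum]
      exact Finset.sum_congr rfl fun j _ => by simp [Pi.smul_apply, smul_eq_mul]; ring
    rw [this, hx, mul_zero]

lemma mem_of_Fq_zero {d e : ℕ} {B : Matrix (Fin d) (Fin e) ℂ} {N : Submodule ℂ (Fin d → ℂ)}
    (hB : IsColBasis B N) {u : Fin d → ℂ}
    (h : ∀ J : Finset (Fin d), J.card = e + 1 → Fq B u J = 0) : u ∈ N := by
  by_contra hu
  have hsnoc : LinearIndependent ℂ (Fin.snoc (fun l => fun i => B i l) u : Fin (e+1) → _) :=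
    linearIndependent_fin_snoc.mpr ⟨hB.1, by rwa [hB.2]⟩
  have hcols : LinearIndependent ℂ (fun k => fun i => Caug B u i k) := by
    have heq : (fun k => fun i => Caug B u i k)
        = (Fin.snoc (fun l => fun i => B i l) u : Fin (e+1) → _) := by
      funext k
      refine Fin.lastCases ?_ ?_ k
      · funext i; simp [Caug, Fin.snoc_last]
      · intro l; funext i; simp [Caug, Fin.snoc_castSucc]
    rw [heq]
    exact hsnoc
  obtain ⟨J, hJ, hdet⟩ := exists_minor_ne_zero (Caug B u) hcols
  apply hdet
  have h0 := h J hJ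
  rw [Fq_eq_det B u hJ] at h0
  rcases mul_eq_zero.mp h0 with h1 | h1
  · exact absurd h1 (pow_ne_zero _ (by norm_num))
  · exact h1

/-- The vector of signed Plücker coordinates attached to an `(e-1)`-subset `I`. -/
noncomputable def wvec {dp ep : ℕ} (Bp : Matrix (Fin dp) (Fin ep) ℂ)
    (I : Finset (Fin dp)) : Fin dp → ℂ :=
  fun i => (-1 : ℂ) ^ (eps i I) * plucker Bp (insert i I)

lemma wvec_eq_zero {dp ep : ℕ} (Bp : Matrix (Fin dp) (Fin ep) ℂ) {I : Finset (Fin dp)}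
    (hI : I.card + 1 = ep) {i : Fin dp} (hi : i ∈ I) : wvec Bp I i = 0 := by
  unfold wvec
  rw [Finset.insert_eq_self.mpr hi, plucker_card_ne _ (by omega), mul_zero]

lemma wvec_apply {dp n : ℕ} (Bp : Matrix (Fin dp) (Fin (n + 1)) ℂ) {I : Finset (Fin dp)}
    (hI : I.card = n) (i : Fin dp) :
    wvec Bp I i = ∑ l : Fin (n + 1),
      ((-1 : ℂ) ^ (l : ℕ) *
        (Bp.submatrix (fun m => I.orderEmbOfFin hI m) (Fin.succAbove l)).det) * Bp i l := by
  set A' : Matrix (Fin (n + 1)) (Fin (n + 1)) ℂ :=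
    fun k => Fin.cases (fun l => Bp i l) (fun m => fun l => Bp (I.orderEmbOfFin hI m) l) k
    with hA'
  have hexp : A'.det = ∑ l : Fin (n + 1),
      (-1 : ℂ) ^ (l : ℕ) * Bp i l *
        (Bp.submatrix (fun m => I.orderEmbOfFin hI m) (Fin.succAbove l)).det := by
    rw [Matrix.det_succ_row_zero]
    refine Finset.sum_congr rfl fun l _ => ?_
    have e1 : A' 0 l = Bp i l := by simp [hA']
    have e2 : A'.submatrix Fin.succ l.succAbove
        = Bp.submatrix (fun m => I.orderEmbOfFin hI m) (Fin.succAbove l) := by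
      ext m l'
      simp [hA', Matrix.submatrix_apply]
      rfl
    rw [e1, e2]
  by_cases him : i ∈ I
  · have hlhs : wvec Bp I i = 0 := by
      unfold wvec
      rw [Finset.insert_eq_self.mpr him, plucker_card_ne _ (by omega), mul_zero]
    obtain ⟨m0, hm0⟩ := exists_enum_eq I hI him
    have hdet0 : A'.det = 0 := by
      apply Matrix.det_zero_of_row_eq (i := 0) (j := m0.succ) (Fin.succ_ne_zero m0).symm
      funext l
      simp [hA', hm0]
    rw [hlhs]
    have := hexp.symm
    rw [hdet0] at this
    rw [← this]
    exact Finset.sum_congr rfl fun l _ => by ring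
  · have hs : (insert i I).card = n + 1 := by
      rw [Finset.card_insert_of_notMem him, hI]
    obtain ⟨k, hk⟩ := exists_enum_eq (insert i I) hs (Finset.mem_insert_self i I)
    have hkval : (k : ℕ) = eps i I := by
      have h1 := card_filter_lt_enum (insert i I) hs k
      rw [hk] at h1
      rw [eps_not_mem him, ← h1]
      congr 1
      ext x
      simp only [Finset.mem_filter, Finset.mem_insert]
      constructor
      · rintro ⟨rfl | hx, hlt⟩
        · exact absurd hlt (lt_irrefl x)
        · exact ⟨hx, hlt⟩
      · rintro ⟨hx, hlt⟩
        exact ⟨Or.inr hx, hlt⟩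
    have h2 : ((insert i I).erase ((insert i I).orderEmbOfFin hs k)).card = n := by
      rw [hk, Finset.erase_insert him, hI]
    have h4 : ∀ m, (insert i I).orderEmbOfFin hs (k.succAbove m) = I.orderEmbOfFin hI m := by
      have hu := Finset.orderEmbOfFin_unique hI
        (f := fun m => ((insert i I).erase ((insert i I).orderEmbOfFin hs k)).orderEmbOfFin h2 m)
        ?_ ?_
      · intro m
        rw [← erase_enum (insert i I) hs k h2 m]
        exact congrFun hu m
      · intro x
        have hx := Finset.orderEmbOfFin_mem ((insert i I).erase ((insert i I).orderEmbOfFin hs k)) h2 x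
        have hx1 := (Finset.mem_erase.mp hx).2
        have hx2 := (Finset.mem_erase.mp hx).1
        rcases Finset.mem_insert.mp hx1 with heq | hmem
        · exact absurd (heq.trans hk.symm) hx2
        · exact hmem
      · exact (Finset.orderEmbOfFin _ h2).strictMono
    unfold wvec
    rw [plucker_eq Bp hs, Matrix.det_succ_row _ k, Finset.mul_sum]
    refine Finset.sum_congr rfl fun l _ => ?_
    have e1 : (Bp.submatrix (fun m => (insert i I).orderEmbOfFin hs m) id) k l = Bp i l := by
      rw [Matrix.submatrix_apply, hk]
      rfl
    have e2 : ((Bp.submatrix (fun m => (insert i I).orderEmbOfFin hs m) id).submatrix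
          k.succAbove l.succAbove)
        = Bp.submatrix (fun m => I.orderEmbOfFin hI m) (Fin.succAbove l) := by
      ext m l'
      simp only [Matrix.submatrix_apply, id]
      rw [h4 m]
    rw [e1, e2]
    have hsign : ((-1 : ℂ)) ^ (eps i I) * (-1) ^ ((k : ℕ) + (l : ℕ)) = (-1) ^ (l : ℕ) := by
      rw [← pow_add, show eps i I + ((k : ℕ) + (l : ℕ)) = (l : ℕ) + 2 * (k : ℕ) + 0 by omega,
        sign_helper, add_zero]
    calc (-1 : ℂ) ^ eps i I * ((-1) ^ ((k : ℕ) + (l : ℕ)) * Bp i l *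
            (Bp.submatrix (fun m => I.orderEmbOfFin hI m) (Fin.succAbove l)).det)
        = ((-1 : ℂ) ^ (eps i I) * (-1) ^ ((k : ℕ) + (l : ℕ))) *
            (Bp i l * (Bp.submatrix (fun m => I.orderEmbOfFin hI m) (Fin.succAbove l)).det) := by
          ring
      _ = _ := by rw [hsign]; ring

lemma wvec_mem {dp n : ℕ} (Bp : Matrix (Fin dp) (Fin (n + 1)) ℂ) {N : Submodule ℂ (Fin dp → ℂ)}
    (hB : IsColBasis Bp N) {I : Finset (Fin dp)} (hI : I.card = n) : wvec Bp I ∈ N := by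
  have heq : wvec Bp I = ∑ l : Fin (n + 1),
      ((-1 : ℂ) ^ (l : ℕ) *
        (Bp.submatrix (fun m => I.orderEmbOfFin hI m) (Fin.succAbove l)).det) •
        (fun i => Bp i l) := by
    funext i
    rw [wvec_apply Bp hI i, Finset.sum_apply]
    exact Finset.sum_congr rfl fun l _ => by simp [smul_eq_mul]
  rw [heq]
  exact Submodule.sum_smul_mem _ _ fun l _ => hB.2 ▸ Submodule.subset_span ⟨l, rfl⟩

lemma qpr_eq_Fq {dp dq ep eq : ℕ} (A : Matrix (Fin dq) (Fin dp) ℂ)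
    (Bp : Matrix (Fin dp) (Fin ep) ℂ) (Bq : Matrix (Fin dq) (Fin eq) ℂ)
    {I : Finset (Fin dp)} (hI : I.card + 1 = ep) (J : Finset (Fin dq)) :
    qpr A Bp Bq I J = Fq Bq (A.mulVec (wvec Bp I)) J := by
  unfold qpr Fq
  rw [Finset.sum_comm]
  refine Finset.sum_congr rfl fun j hj => ?_
  have hmv : A.mulVec (wvec Bp I) j = ∑ i ∈ Iᶜ, A j i * wvec Bp I i := by
    rw [Matrix.mulVec, dotProduct]
    refine (Finset.sum_subset (Finset.subset_univ Iᶜ) fun i _ hi => ?_).symm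
    rw [wvec_eq_zero Bp hI (by simpa using hi), mul_zero]
  rw [hmv, Finset.mul_sum, Finset.sum_mul]
  refine Finset.sum_congr rfl fun i hi => ?_
  unfold wvec
  rw [pow_add]
  ring

end QPRaux

open QPRaux

theorem stmt3 {dp dq ep eq : ℕ}
    (Np : Submodule ℂ (Fin dp → ℂ)) (Nq : Submodule ℂ (Fin dq → ℂ))
    (Bp : Matrix (Fin dp) (Fin ep) ℂ) (Bq : Matrix (Fin dq) (Fin eq) ℂ)
    (hBp : IsColBasis Bp Np) (hBq : IsColBasis Bq Nq)
    (A : Matrix (Fin dq) (Fin dp) ℂ) :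
    (∀ x ∈ Np, A.mulVec x ∈ Nq) ↔
      (∀ I : Finset (Fin dp), I.card + 1 = ep →
        ∀ J : Finset (Fin dq), J.card = eq + 1 → qpr A Bp Bq I J = 0) := by
  constructor
  · intro hA I hI J hJ
    obtain ⟨n, rfl⟩ : ∃ n, ep = n + 1 := ⟨I.card, hI.symm⟩
    have hIn : I.card = n := by omega
    rw [qpr_eq_Fq A Bp Bq hI J]
    exact Fq_zero_of_mem hBq (hA _ (wvec_mem Bp hBp hIn)) hJ
  · intro hrel x hx
    obtain ⟨I0, hI0, hdet0⟩ := exists_minor_ne_zero Bp hBp.1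
    have hpl0 : plucker Bp I0 ≠ 0 := by rw [plucker_eq _ hI0]; exact hdet0
    set S : Submodule ℂ (Fin dp → ℂ) := Np ⊓ Submodule.comap (Matrix.mulVecLin A) Nq with hS
    suffices hSN : S = Np by
      have hxS : x ∈ S := hSN ▸ hx
      have h2 := (Submodule.mem_inf.mp hxS).2
      rw [Submodule.mem_comap, Matrix.mulVecLin_apply] at h2
      exact h2
    rcases Nat.eq_zero_or_pos ep with hep | hep
    · subst hep
      have hbot : Np = ⊥ := by
        rw [← hBp.2]
        rw [Set.range_eq_empty (fun (l : Fin 0) => fun i => Bp i l), Submodule.span_empty]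
      apply le_antisymm inf_le_left
      rw [hbot]
      exact bot_le
    · obtain ⟨n, rfl⟩ : ∃ n, ep = n + 1 := ⟨ep - 1, by omega⟩
      set W : Fin (n + 1) → (Fin dp → ℂ) :=
        fun k => wvec Bp (I0.erase (I0.orderEmbOfFin hI0 k)) with hW
      have hIk : ∀ k : Fin (n + 1), (I0.erase (I0.orderEmbOfFin hI0 k)).card = n := fun k => by
        rw [Finset.card_erase_of_mem (Finset.orderEmbOfFin_mem I0 hI0 k), hI0]
        omega
      have hWS : ∀ k, W k ∈ S := by
        intro k
        refine Submodule.mem_inf.mpr ⟨wvec_mem Bp hBp (hIk k), ?_⟩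
        rw [Submodule.mem_comap, Matrix.mulVecLin_apply]
        apply mem_of_Fq_zero hBq
        intro J hJ
        rw [← qpr_eq_Fq A Bp Bq (by rw [hIk k]) J]
        exact hrel _ (by rw [hIk k]) J hJ
      have hWind : LinearIndependent ℂ W := by
        rw [Fintype.linearIndependent_iff]
        intro c hc k
        have h1 := congrFun hc (I0.orderEmbOfFin hI0 k)
        rw [Finset.sum_apply, Pi.zero_apply] at h1
        rw [Finset.sum_eq_single k (fun k' _ hk' => by
          have hmem : I0.orderEmbOfFin hI0 k ∈ I0.erase (I0.orderEmbOfFin hI0 k') :=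
            Finset.mem_erase.mpr ⟨fun h => hk' ((I0.orderEmbOfFin hI0).injective h).symm,
              Finset.orderEmbOfFin_mem I0 hI0 k⟩
          have hz : wvec Bp (I0.erase (I0.orderEmbOfFin hI0 k')) (I0.orderEmbOfFin hI0 k) = 0 :=
            wvec_eq_zero Bp (by rw [hIk k']) hmem
          simp only [Pi.smul_apply, hW, hz, smul_zero])
          (by simp)] at h1
        have hval : W k (I0.orderEmbOfFin hI0 k) =
            (-1 : ℂ) ^ (eps (I0.orderEmbOfFin hI0 k) (I0.erase (I0.orderEmbOfFin hI0 k))) *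
              plucker Bp I0 := by
          show wvec Bp (I0.erase (I0.orderEmbOfFin hI0 k)) (I0.orderEmbOfFin hI0 k) = _
          unfold wvec
          rw [Finset.insert_erase (Finset.orderEmbOfFin_mem I0 hI0 k)]
        rw [Pi.smul_apply, hval, smul_eq_mul] at h1
        rcases mul_eq_zero.mp h1 with h | h
        · exact h
        · exact absurd h (mul_ne_zero (pow_ne_zero _ (by norm_num)) hpl0)
      have hle : Submodule.span ℂ (Set.range W) ≤ S := by
        rw [Submodule.span_le]
        rintro _ ⟨k, rfl⟩
        exact hWS k
      have h1 : Module.finrank ℂ (Submodule.span ℂ (Set.range W)) = n + 1 := by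
        rw [finrank_span_eq_card hWind, Fintype.card_fin]
      have h2 : Module.finrank ℂ Np = n + 1 := by
        rw [← hBp.2, finrank_span_eq_card hBp.1, Fintype.card_fin]
      refine Submodule.eq_of_le_of_finrank_le inf_le_left ?_
      rw [h2, ← h1]
      exact Submodule.finrank_mono hle
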